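/- arXiv:2512.10482 — 7 statements merged into one kernel-verified Lean document; each statement's English description precedes it below -/
import Mathlib

section
/- Let V, g, E = V ⊕ V* ⊕ g and 𝒥 with components (J, A, B, C, μ, ν) be as above, satisfying 𝒥* = -𝒥 and 𝒥² = -Id, and assume B : V* → V is bijective. Set Ã := A + νB⁻¹ν*. Then Ã is skew-symmetric, Ã² = -Id_g, JB - BJ* = ν*ν, and moreover C = -B⁻¹(ν*Ãν B⁻¹ + Id) - J*B⁻¹J and μ = νB⁻¹J - ÃνB⁻¹. -/
/-- The canonical pairing on `E = V ⊕ V* ⊕ g`. -/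
noncomputable def pairE {V g : Type*} [AddCommGroup V] [Module ℝ V] [AddCommGroup g] [Module ℝ g]
    (bg : LinearMap.BilinForm ℝ g) (u v : V × Module.Dual ℝ V × g) : ℝ :=
  (1 / 2 : ℝ) * (v.2.1 u.1 + u.2.1 v.1) + bg u.2.2 v.2.2

/-- The block endomorphism `𝒥` of `E = V ⊕ V* ⊕ g` with components `(J, A, B, C, μ, ν)`. -/
noncomputable def JblockE {V g : Type*} [AddCommGroup V] [Module ℝ V] [AddCommGroup g] [Module ℝ g]
    (J : V →ₗ[ℝ] V) (B : Module.Dual ℝ V →ₗ[ℝ] V) (C : V →ₗ[ℝ] Module.Dual ℝ V)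
    (A : g →ₗ[ℝ] g) (μ : V →ₗ[ℝ] g) (ν : Module.Dual ℝ V →ₗ[ℝ] g)
    (νs : g →ₗ[ℝ] V) (μs : g →ₗ[ℝ] Module.Dual ℝ V)
    (u : V × Module.Dual ℝ V × g) : V × Module.Dual ℝ V × g :=
  (J u.1 + B u.2.1 - νs u.2.2,
   C u.1 - J.dualMap u.2.1 - μs u.2.2,
   μ u.1 + ν u.2.1 + A u.2.2)

/-- For a skew-symmetric `𝒥` with `𝒥² = -Id` whose component
`B : V* → V` is bijective (with inverse `Binv`), the map `Ã := A + ν B⁻¹ ν*` is a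
skew-symmetric complex structure on `g`, `JB - BJ* = ν*ν`, and `C` and `μ` are
determined by `(J, Ã, B, ν)` by the stated formulas. -/
theorem stmt_3 {V g : Type*} [AddCommGroup V] [Module ℝ V] [FiniteDimensional ℝ V]
    [AddCommGroup g] [Module ℝ g] [FiniteDimensional ℝ g]
    (bg : LinearMap.BilinForm ℝ g)
    (hbg_symm : ∀ r s : g, bg r s = bg s r)
    (hbg_nd : ∀ r : g, (∀ s : g, bg r s = 0) → r = 0)
    (J : V →ₗ[ℝ] V) (B : Module.Dual ℝ V →ₗ[ℝ] V) (C : V →ₗ[ℝ] Module.Dual ℝ V)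
    (A : g →ₗ[ℝ] g) (μ : V →ₗ[ℝ] g) (ν : Module.Dual ℝ V →ₗ[ℝ] g)
    (νs : g →ₗ[ℝ] V) (μs : g →ₗ[ℝ] Module.Dual ℝ V)
    (hνs : ∀ (r : g) (ξ : Module.Dual ℝ V), ξ (νs r) = 2 * bg r (ν ξ))
    (hμs : ∀ (r : g) (X : V), μs r X = 2 * bg r (μ X))
    (hskew : ∀ u v : V × Module.Dual ℝ V × g,
        pairE bg (JblockE J B C A μ ν νs μs u) v = - pairE bg u (JblockE J B C A μ ν νs μs v))
    (hsq : ∀ u : V × Module.Dual ℝ V × g,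
        JblockE J B C A μ ν νs μs (JblockE J B C A μ ν νs μs u) = -u)
    (Binv : V →ₗ[ℝ] Module.Dual ℝ V)
    (hB1 : ∀ ξ : Module.Dual ℝ V, Binv (B ξ) = ξ)
    (hB2 : ∀ X : V, B (Binv X) = X) :
    let Atil : g →ₗ[ℝ] g := A + (ν ∘ₗ Binv ∘ₗ νs)
    (∀ r s : g, bg (Atil r) s = - bg r (Atil s)) ∧
    (∀ r : g, Atil (Atil r) = -r) ∧
    (∀ ξ : Module.Dual ℝ V, J (B ξ) - B (J.dualMap ξ) = νs (ν ξ)) ∧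
    (∀ X : V, C X = -(Binv (νs (Atil (ν (Binv X))) + X)) - J.dualMap (Binv (J X))) ∧
    (∀ X : V, μ X = ν (Binv (J X)) - Atil (ν (Binv X))) := by

  intro Atil
  have hAtil : ∀ r, Atil r = A r + ν (Binv (νs r)) := fun r => rfl
  -- component identities from hsq
  have e1 : ∀ ξ : Module.Dual ℝ V, J (B ξ) - B (J.dualMap ξ) = νs (ν ξ) := by
    intro ξ
    have h := congrArg Prod.fst (hsq (0, ξ, 0))
    simp only [JblockE, map_zero, map_add, map_sub, map_neg, zero_add, add_zero, sub_zero,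
      zero_sub, neg_zero, Prod.fst_neg, Prod.snd_neg, Prod.fst, Prod.snd] at h
    rw [← sub_eq_zero, ← h]; abel
  have e2 : ∀ ξ : Module.Dual ℝ V, μ (B ξ) = ν (J.dualMap ξ) - A (ν ξ) := by
    intro ξ
    have h := congrArg (fun p : V × Module.Dual ℝ V × g => p.2.2) (hsq (0, ξ, 0))
    simp only [JblockE, map_zero, map_add, map_sub, map_neg, zero_add, add_zero, sub_zero,
      zero_sub, neg_zero, Prod.fst_neg, Prod.snd_neg, Prod.fst, Prod.snd] at h
    rw [← sub_eq_zero, ← h]; abel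
  have f1 : ∀ X : V, B (C X) = -X - J (J X) + νs (μ X) := by
    intro X
    have h := congrArg Prod.fst (hsq (X, 0, 0))
    simp only [JblockE, map_zero, map_add, map_sub, map_neg, zero_add, add_zero, sub_zero,
      zero_sub, neg_zero, Prod.fst_neg, Prod.snd_neg, Prod.fst, Prod.snd] at h
    rw [← sub_eq_zero, ← h]; abel
  have g1 : ∀ r : g, B (μs r) = -(J (νs r)) - νs (A r) := by
    intro r
    have h := congrArg Prod.fst (hsq (0, 0, r))
    simp only [JblockE, map_zero, map_add, map_sub, map_neg, zero_add, add_zero, sub_zero,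
      zero_sub, neg_zero, Prod.fst_neg, Prod.snd_neg, Prod.fst, Prod.snd] at h
    rw [← sub_eq_zero, ← neg_eq_zero, ← h]; abel
  have g3 : ∀ r : g, A (A r) = μ (νs r) + ν (μs r) - r := by
    intro r
    have h := congrArg (fun p : V × Module.Dual ℝ V × g => p.2.2) (hsq (0, 0, r))
    simp only [JblockE, map_zero, map_add, map_sub, map_neg, zero_add, add_zero, sub_zero,
      zero_sub, neg_zero, Prod.fst_neg, Prod.snd_neg, Prod.fst, Prod.snd] at h
    have h2 : -μ (νs r) + -ν (μs r) + A (A r) + r = 0 := by rw [h]; abel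
    rw [← sub_eq_zero, ← h2]; abel
  -- skewness identities from hskew
  have skewA : ∀ r s : g, bg (A r) s = - bg r (A s) := by
    intro r s
    have h := hskew (0, 0, r) (0, 0, s)
    simp only [pairE, JblockE, map_zero, map_add, map_sub, map_neg, zero_add, add_zero,
      sub_zero, zero_sub, neg_zero, LinearMap.zero_apply, LinearMap.neg_apply,
      LinearMap.sub_apply, mul_zero, neg_neg] at h
    linarith
  have skewB : ∀ ξ η : Module.Dual ℝ V, η (B ξ) = - ξ (B η) := by
    intro ξ η
    have h := hskew (0, ξ, 0) (0, η, 0)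
    simp only [pairE, JblockE, map_zero, map_add, map_sub, map_neg, zero_add, add_zero,
      sub_zero, zero_sub, neg_zero, LinearMap.zero_apply, LinearMap.neg_apply,
      LinearMap.sub_apply, mul_zero, neg_neg] at h
    linarith
  -- derived pointwise formulas
  have hmuX : ∀ X : V, μ X = ν (J.dualMap (Binv X)) - A (ν (Binv X)) := by
    intro X
    have h := e2 (Binv X); rwa [hB2] at h
  have hmus : ∀ r : g, μs r = -(Binv (J (νs r))) - Binv (νs (A r)) := by
    intro r
    have h := congrArg Binv (g1 r)
    rw [hB1] at h
    rw [h]; simp only [map_sub, map_neg]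
  have hQ : ∀ X : V, Binv (νs (ν (Binv X))) = Binv (J X) - J.dualMap (Binv X) := by
    intro X
    have h := congrArg Binv (e1 (Binv X)).symm
    rw [map_sub, hB2, hB1] at h
    rw [h]
  -- statement 5
  have s5 : ∀ X : V, μ X = ν (Binv (J X)) - Atil (ν (Binv X)) := by
    intro X
    rw [hAtil, hQ, map_sub, hmuX]; abel
  refine ⟨?_, ?_, e1, ?_, s5⟩
  · -- skewness of Atil
    intro r s
    have h1 := hνs s (Binv (νs r))
    have h2 := hνs r (Binv (νs s))
    have h3 := skewB (Binv (νs s)) (Binv (νs r))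
    rw [hB2, hB2] at h3
    have h4 := hbg_symm s (ν (Binv (νs r)))
    have h5 := hbg_symm (A r) s
    have h6 := skewA r s
    simp only [hAtil, map_add, LinearMap.add_apply]
    have h7 : bg (ν (Binv (νs r))) s = bg s (ν (Binv (νs r))) :=
      hbg_symm (ν (Binv (νs r))) s
    linarith
  · -- Atil squared is -1
    intro r
    simp only [hAtil, map_add]
    rw [g3, hmuX (νs r), hmus r, hQ (νs r)]
    simp only [map_sub, map_neg, map_add]
    abel
  · -- formula for C
    intro X
    rw [show C X = Binv (B (C X)) from (hB1 _).symm, f1 X]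
    rw [s5 X]
    simp only [map_sub, map_add, map_neg]
    rw [hQ (J X)]
    abel
end

section
/- Conversely: let V, g be as above, B : V* → V bijective with B* = -B, Ã ∈ End(g) with Ã* = -Ã and Ã² = -Id, J ∈ End(V) and ν : V* → g satisfying JB - BJ* = ν*ν. Define A := Ã - νB⁻¹ν*, C := -B⁻¹(ν*Ãν B⁻¹ + Id) - J*B⁻¹J, and μ := νB⁻¹J - ÃνB⁻¹. Then the endomorphism 𝒥 of E = V ⊕ V* ⊕ g with components (J, A, B, C, μ, ν) satisfies 𝒥* = -𝒥 and 𝒥² = -Id. -/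
/-- Conversely, given `B` bijective and skew, `Ã` a skew-symmetric
complex structure on `g`, `J` and `ν` with `JB - BJ* = ν*ν`, the endomorphism `𝒥`
with components `A := Ã - νB⁻¹ν*`, `C := -B⁻¹(ν*ÃνB⁻¹ + Id) - J*B⁻¹J`,
`μ := νB⁻¹J - ÃνB⁻¹` satisfies `𝒥* = -𝒥` and `𝒥² = -Id`. -/
theorem stmt_4 {V g : Type*} [AddCommGroup V] [Module ℝ V] [FiniteDimensional ℝ V]
    [AddCommGroup g] [Module ℝ g] [FiniteDimensional ℝ g]
    (bg : LinearMap.BilinForm ℝ g)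
    (hbg_symm : ∀ r s : g, bg r s = bg s r)
    (hbg_nd : ∀ r : g, (∀ s : g, bg r s = 0) → r = 0)
    (B : Module.Dual ℝ V →ₗ[ℝ] V) (Binv : V →ₗ[ℝ] Module.Dual ℝ V)
    (hB1 : ∀ ξ : Module.Dual ℝ V, Binv (B ξ) = ξ)
    (hB2 : ∀ X : V, B (Binv X) = X)
    (hBskew : ∀ ξ η : Module.Dual ℝ V, η (B ξ) = - ξ (B η))
    (Atil : g →ₗ[ℝ] g)
    (hAskew : ∀ r s : g, bg (Atil r) s = - bg r (Atil s))
    (hAsq : ∀ r : g, Atil (Atil r) = -r)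
    (J : V →ₗ[ℝ] V) (ν : Module.Dual ℝ V →ₗ[ℝ] g) (νs : g →ₗ[ℝ] V)
    (hνs : ∀ (r : g) (ξ : Module.Dual ℝ V), ξ (νs r) = 2 * bg r (ν ξ))
    (hJB : ∀ ξ : Module.Dual ℝ V, J (B ξ) - B (J.dualMap ξ) = νs (ν ξ))
    (μs : g →ₗ[ℝ] Module.Dual ℝ V)
    (hμs : ∀ (r : g) (X : V),
      μs r X = 2 * bg r (ν (Binv (J X)) - Atil (ν (Binv X)))) :
    let A : g →ₗ[ℝ] g := Atil - (ν ∘ₗ Binv ∘ₗ νs)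
    let C : V →ₗ[ℝ] Module.Dual ℝ V :=
      -(Binv ∘ₗ νs ∘ₗ Atil ∘ₗ ν ∘ₗ Binv) - Binv - (J.dualMap ∘ₗ Binv ∘ₗ J)
    let μ : V →ₗ[ℝ] g := (ν ∘ₗ Binv ∘ₗ J) - (Atil ∘ₗ ν ∘ₗ Binv)
    (∀ u v : V × Module.Dual ℝ V × g,
        pairE bg (JblockE J B C A μ ν νs μs u) v = - pairE bg u (JblockE J B C A μ ν νs μs v)) ∧
    (∀ u : V × Module.Dual ℝ V × g,
        JblockE J B C A μ ν νs μs (JblockE J B C A μ ν νs μs u) = -u) := by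
  intro A C μ
  -- basic helpers
  have hBinj : Function.Injective B := fun a b h => by rw [← hB1 a, h, hB1]
  have hQskew : ∀ X Y : V, Binv X Y = - Binv Y X := by
    intro X Y
    have h := hBskew (Binv X) (Binv Y)
    rw [hB2, hB2] at h
    linarith
  have hμs2 : ∀ s : g, μs s = -(J.dualMap (Binv (νs s))) - Binv (νs (Atil s)) := by
    intro s
    apply LinearMap.ext
    intro X
    have H0 : μs s X = 2 * bg s (ν (Binv (J X))) - 2 * bg s (Atil (ν (Binv X))) := by
      rw [hμs, map_sub]; ring
    simp only [LinearMap.sub_apply, LinearMap.neg_apply, LinearMap.dualMap_apply]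
    linear_combination H0 - hνs s (Binv (J X)) + hQskew (νs s) (J X) - 2 * hAskew s (ν (Binv X))
      - hνs (Atil s) (Binv X) + hQskew (νs (Atil s)) X
  have hJ1 : ∀ ξ : Module.Dual ℝ V, J (B ξ) = B (J.dualMap ξ) + νs (ν ξ) := by
    intro ξ; have := hJB ξ; linear_combination (norm := module) this
  have hJ1x : ∀ W : V, J W = B (J.dualMap (Binv W)) + νs (ν (Binv W)) := by
    intro W; have := hJ1 (Binv W); rwa [hB2] at this
  have hJq : ∀ W : V,
      Binv (J W) = J.dualMap (Binv W) + Binv (νs (ν (Binv W))) := by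
    intro W
    conv_lhs => rw [hJ1x W]
    rw [map_add, hB1]
  have hJq0 : ∀ ξ : Module.Dual ℝ V,
      Binv (J (B ξ)) = J.dualMap ξ + Binv (νs (ν ξ)) := by
    intro ξ; have := hJq (B ξ); rwa [hB1] at this
  have hJq2 : ∀ W : V,
      B (J.dualMap (Binv (J W))) =
        B (J.dualMap (J.dualMap (Binv W))) + B (J.dualMap (Binv (νs (ν (Binv W))))) := by
    intro W; rw [hJq W, map_add, map_add]
  have hJq20 : ∀ ξ : Module.Dual ℝ V,
      B (J.dualMap (Binv (J (B ξ)))) =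
        B (J.dualMap (J.dualMap ξ)) + B (J.dualMap (Binv (νs (ν ξ)))) := by
    intro ξ; rw [hJq0 ξ, map_add, map_add]
  have hνJq : ∀ W : V,
      ν (Binv (J W)) = ν (J.dualMap (Binv W)) + ν (Binv (νs (ν (Binv W)))) := by
    intro W; rw [hJq W, map_add]
  have hνJq0 : ∀ ξ : Module.Dual ℝ V,
      ν (Binv (J (B ξ))) = ν (J.dualMap ξ) + ν (Binv (νs (ν ξ))) := by
    intro ξ; rw [hJq0 ξ, map_add]
  have key3 : ∀ (t : g) (W : V), (Binv (νs t)) W = -2 * bg t (ν (Binv W)) := by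
    intro t W
    rw [hQskew (νs t) W, hνs t (Binv W)]
    ring
  have key2 : ∀ r s : g, bg (ν (Binv (νs r))) s = - bg r (ν (Binv (νs s))) := by
    intro r s
    rw [hbg_symm]
    have h1 := hνs s (Binv (νs r))
    have h2 := hνs r (Binv (νs s))
    have h3 := hQskew (νs r) (νs s)
    linarith
  have key1 : ∀ X Y : V,
      (Binv (νs (Atil (ν (Binv X))))) Y = -((Binv (νs (Atil (ν (Binv Y))))) X) := by
    intro X Y
    linear_combination key3 (Atil (ν (Binv X))) Y + key3 (Atil (ν (Binv Y))) X
      - 2 * hAskew (ν (Binv X)) (ν (Binv Y)) + 2 * hbg_symm (ν (Binv X)) (Atil (ν (Binv Y)))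
  constructor
  · rintro ⟨X, ξ, r⟩ ⟨Y, η, s⟩
    simp only [pairE, JblockE, A, C, μ, LinearMap.comp_apply, LinearMap.sub_apply,
      LinearMap.add_apply, LinearMap.neg_apply, map_add, map_sub, map_neg,
      LinearMap.dualMap_apply, hμs2]
    linear_combination (1/2 : ℝ) * hBskew ξ η
      - (1/2 : ℝ) * hνs r η
      - (1/2 : ℝ) * hQskew X Y
      - (1/2 : ℝ) * hQskew (J X) (J Y)
      - (1/2 : ℝ) * key1 X Y
      + (1/2 : ℝ) * key3 r (J Y)
      + (1/2 : ℝ) * key3 s (J X) + hbg_symm (ν (Binv (J X))) s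
      + (1/2 : ℝ) * key3 (Atil r) Y - hAskew r (ν (Binv Y))
      + (1/2 : ℝ) * key3 (Atil s) X - hAskew s (ν (Binv X)) - hbg_symm (Atil (ν (Binv X))) s
      - (1/2 : ℝ) * hνs s ξ + hbg_symm (ν ξ) s
      + hAskew r s
      - key2 r s
  · rintro ⟨X, ξ, r⟩
    refine Prod.ext ?_ (Prod.ext ?_ ?_)
    · simp only [JblockE, A, C, μ, LinearMap.comp_apply, LinearMap.sub_apply,
        LinearMap.add_apply, LinearMap.neg_apply, map_add, map_sub, map_neg,
        hB1, hB2, hμs2, hAsq, Prod.fst_neg, Prod.snd_neg]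
      linear_combination (norm := module) hJ1x (J X) + hJ1 ξ - hJ1x (νs r)
    · simp only [JblockE, A, C, μ, LinearMap.comp_apply, LinearMap.sub_apply,
        LinearMap.add_apply, LinearMap.neg_apply, map_add, map_sub, map_neg,
        hB1, hB2, hμs2, hAsq, Prod.fst_neg, Prod.snd_neg]
      apply hBinj
      simp only [map_add, map_sub, map_neg, hB1, hB2]
      linear_combination (norm := module) - hJ1x X - hJq2 (J X) - hJq20 ξ + hJq2 (νs r)
    · simp only [JblockE, A, C, μ, LinearMap.comp_apply, LinearMap.sub_apply,
        LinearMap.add_apply, LinearMap.neg_apply, map_add, map_sub, map_neg,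
        hB1, hB2, hμs2, hAsq, Prod.fst_neg, Prod.snd_neg]
      linear_combination (norm := module) hνJq (J X) + hνJq0 ξ - hνJq (νs r)
end

section
/- (Hitchin pair, linear algebra version.) Let V be a finite-dimensional real vector space, B : V* → V a bijective linear map with B* = -B, and J ∈ End(V) satisfying JB = BJ*. Define C := -B⁻¹ - J*B⁻¹J : V → V*. Then the endomorphism 𝒥 of V ⊕ V* given in block form by 𝒥(X + ξ) = (JX + Bξ) + (CX - J*ξ) satisfies 𝒥² = -Id and is skew-symmetric with respect to the canonical pairing ⟨X+ξ, Y+η⟩ = (1/2)(η(X) + ξ(Y)). -/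
/-- **Hitchin pair, linear algebra version.** If `B : V* → V` is bijective
with `B* = -B` and `J ∈ End(V)` satisfies `JB = BJ*`, then the block endomorphism
`𝒥(X+ξ) = (JX + Bξ) + (CX - J*ξ)` with `C := -B⁻¹ - J*B⁻¹J` satisfies `𝒥² = -Id` and
is skew-symmetric for the canonical pairing on `V ⊕ V*`. -/
theorem stmt_5 {V : Type*} [AddCommGroup V] [Module ℝ V] [FiniteDimensional ℝ V]
    (B : Module.Dual ℝ V →ₗ[ℝ] V) (Binv : V →ₗ[ℝ] Module.Dual ℝ V)
    (hB1 : ∀ ξ : Module.Dual ℝ V, Binv (B ξ) = ξ)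
    (hB2 : ∀ X : V, B (Binv X) = X)
    (hBskew : ∀ ξ η : Module.Dual ℝ V, η (B ξ) = - ξ (B η))
    (J : V →ₗ[ℝ] V)
    (hJB : ∀ ξ : Module.Dual ℝ V, J (B ξ) = B (J.dualMap ξ)) :
    let C : V →ₗ[ℝ] Module.Dual ℝ V := -Binv - (J.dualMap ∘ₗ Binv ∘ₗ J)
    let 𝒥 : V × Module.Dual ℝ V → V × Module.Dual ℝ V :=
      fun u => (J u.1 + B u.2, C u.1 - J.dualMap u.2)
    (∀ u : V × Module.Dual ℝ V, 𝒥 (𝒥 u) = -u) ∧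
    (∀ u v : V × Module.Dual ℝ V,
      (1 / 2 : ℝ) * (v.2 (𝒥 u).1 + (𝒥 u).2 v.1)
        = -((1 / 2 : ℝ) * ((𝒥 v).2 u.1 + u.2 (𝒥 v).1))) := by
  intro C 𝒥
  have key1 : ∀ X, Binv (J X) = J.dualMap (Binv X) := by
    intro X
    have h := hJB (Binv X)
    rw [hB2] at h
    rw [h, hB1]
  have Binvskew : ∀ X Y : V, (Binv X) Y = -(Binv Y) X := by
    intro X Y
    have h := hBskew (Binv X) (Binv Y)
    rw [hB2, hB2] at h
    linarith
  constructor
  · rintro ⟨X, ξ⟩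
    have c1 : J (J X + B ξ) + B (C X - J.dualMap ξ) = -X := by
      simp only [C, map_add, map_sub, map_neg, LinearMap.sub_apply,
        LinearMap.neg_apply, LinearMap.comp_apply, hB1, hB2, hJB, key1]
      rw [← hJB, ← hJB, ← hJB, hB2]
      abel
    have c2 : C (J X + B ξ) - J.dualMap (C X - J.dualMap ξ) = -ξ := by
      simp only [C, map_add, map_sub, map_neg, LinearMap.sub_apply,
        LinearMap.neg_apply, LinearMap.comp_apply, hB1, hB2, key1]
      abel
    simp only [𝒥, Prod.mk.injEq, Prod.neg_mk]
    exact ⟨c1, c2⟩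
  · rintro ⟨X, ξ⟩ ⟨Y, η⟩
    simp only [𝒥, C, map_add, map_sub, map_neg, LinearMap.sub_apply,
      LinearMap.neg_apply, LinearMap.comp_apply, LinearMap.add_apply,
      LinearMap.dualMap_apply']
    have h1 : η (B ξ) = - ξ (B η) := hBskew ξ η
    have h2 : (Binv X) Y = -(Binv Y) X := Binvskew X Y
    have h3 : (Binv (J X)) (J Y) = -(Binv (J Y)) (J X) := Binvskew (J X) (J Y)
    simp -failIfUnchanged only [LinearMap.comp_apply] at *
    ring_nf
    linarith
end

section
/- Let g be the 6-dimensional real nilpotent Lie algebra with basis e₁,…,e₆ and nonzero brackets [e₁,e₂] = e₄, [e₁,e₄] = e₅, [e₂,e₄] = e₆ (all other brackets of basis vectors zero). Then the symmetric bilinear form β₀ determined by β₀(e₁,e₆) = β₀(e₆,e₁) = 1, β₀(e₂,e₅) = β₀(e₅,e₂) = -1, β₀(e₃,e₃) = -1, β₀(e₄,e₄) = 1, and all other components zero, is ad-invariant (β₀([x,y],z) + β₀(y,[x,z]) = 0 for all x,y,z) and nondegenerate of signature (3,3). -/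
theorem cv5 {α : Type*} (x : α) (u : Fin 5 → α) : Matrix.vecCons x u 5 = u 4 := rfl
theorem cv4 {α : Type*} (x : α) (u : Fin 4 → α) : Matrix.vecCons x u 4 = u 3 := rfl
theorem cv3 {α : Type*} (x : α) (u : Fin 3 → α) : Matrix.vecCons x u 3 = u 2 := rfl
theorem cv2 {α : Type*} (x : α) (u : Fin 2 → α) : Matrix.vecCons x u 2 = u 1 := rfl
theorem cv1 {α : Type*} (x : α) (u : Fin 1 → α) : Matrix.vecCons x u 1 = u 0 := rfl

theorem my_lie_sum {g : Type*} [LieRing g] {ι : Type*} (x : g) (s : Finset ι) (f : ι → g) :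
    ⁅x, ∑ i ∈ s, f i⁆ = ∑ i ∈ s, ⁅x, f i⁆ :=
  map_sum (AddMonoidHom.mk' (fun y => ⁅x, y⁆) (lie_add x)) f s

theorem my_sum_lie {g : Type*} [LieRing g] {ι : Type*} (x : g) (s : Finset ι) (f : ι → g) :
    ⁅∑ i ∈ s, f i, x⁆ = ∑ i ∈ s, ⁅f i, x⁆ :=
  map_sum (AddMonoidHom.mk' (fun y => ⁅y, x⁆) (fun a b => add_lie a b x)) f s

set_option maxHeartbeats 4000000 in
/-- On the 6-dimensional nilpotent Lie algebra with nonzero brackets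
`[e₁,e₂] = e₄`, `[e₁,e₄] = e₅`, `[e₂,e₄] = e₆` (here 0-indexed), the symmetric bilinear
form `β₀ = 2e¹e⁶ - 2e²e⁵ - (e³)² + (e⁴)²` is ad-invariant and nondegenerate of
signature `(3,3)`. -/
theorem stmt_13 {g : Type*} [LieRing g] [LieAlgebra ℝ g]
    (e : Module.Basis (Fin 6) ℝ g)
    (h12 : ⁅e 0, e 1⁆ = e 3) (h14 : ⁅e 0, e 3⁆ = e 4) (h24 : ⁅e 1, e 3⁆ = e 5)
    (h0 : ∀ i j : Fin 6,
      (i, j) ∉ ({(0,1), (1,0), (0,3), (3,0), (1,3), (3,1)} : Set (Fin 6 × Fin 6)) →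
      ⁅e i, e j⁆ = 0)
    (β : LinearMap.BilinForm ℝ g)
    (hβ : ∀ i j : Fin 6, β (e i) (e j) =
      (![![0,0,0,0,0,1], ![0,0,0,0,-1,0], ![0,0,-1,0,0,0],
         ![0,0,0,1,0,0], ![0,-1,0,0,0,0], ![1,0,0,0,0,0]] : Fin 6 → Fin 6 → ℝ) i j) :
    (∀ x y z : g, β ⁅x, y⁆ z + β y ⁅x, z⁆ = 0) ∧
    (∀ x : g, (∀ y : g, β x y = 0) → x = 0) ∧
    (∃ f : Module.Basis (Fin 6) ℝ g,
      (∀ i j : Fin 6, i ≠ j → β (f i) (f j) = 0) ∧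
      (∀ i : Fin 6, β (f i) (f i) = if (i : ℕ) < 3 then 1 else -1)) := by
  have hbr : ∀ i j : Fin 6, ⁅e i, e j⁆ =
      (![![0, e 3, 0, e 4, 0, 0],
         ![-e 3, 0, 0, e 5, 0, 0],
         ![0, 0, 0, 0, 0, 0],
         ![-e 4, -e 5, 0, 0, 0, 0],
         ![0, 0, 0, 0, 0, 0],
         ![0, 0, 0, 0, 0, 0]] : Fin 6 → Fin 6 → g) i j := by
    have h21 : ⁅e 1, e 0⁆ = -e 3 := by rw [← lie_skew, h12]
    have h41 : ⁅e 3, e 0⁆ = -e 4 := by rw [← lie_skew, h14]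
    have h42 : ⁅e 3, e 1⁆ = -e 5 := by rw [← lie_skew, h24]
    intro i j
    fin_cases i <;> fin_cases j <;>
      simp [h12, h14, h24, h21, h41, h42, Matrix.cons_val_succ, Matrix.vecHead,
        Matrix.vecTail] <;>
      first | rfl | (apply h0 _ _; simp)
  have key : ∀ i j k : Fin 6, β ⁅e i, e j⁆ (e k) + β (e j) ⁅e i, e k⁆ = 0 := by
    intro i j k
    fin_cases i <;> fin_cases j <;> fin_cases k <;>
      simp [hbr, hβ, cv5, cv4, cv3, cv2, cv1, Matrix.vecHead, Matrix.vecTail]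
  refine ⟨?_, ?_, ?_⟩
  · intro x y z
    obtain ⟨a, rfl⟩ : ∃ a : Fin 6 → ℝ, ∑ i, a i • e i = x := ⟨e.repr x, e.sum_repr x⟩
    obtain ⟨b, rfl⟩ : ∃ b : Fin 6 → ℝ, ∑ i, b i • e i = y := ⟨e.repr y, e.sum_repr y⟩
    obtain ⟨c, rfl⟩ : ∃ c : Fin 6 → ℝ, ∑ i, c i • e i = z := ⟨e.repr z, e.sum_repr z⟩
    simp only [my_lie_sum, my_sum_lie, smul_lie, lie_smul, map_sum, map_smul,
      LinearMap.sum_apply, LinearMap.smul_apply, smul_eq_mul, Finset.mul_sum, Finset.sum_smul]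
    rw [← Finset.sum_add_distrib]
    refine Finset.sum_eq_zero fun k _ => ?_
    rw [Finset.sum_comm]
    rw [← Finset.sum_add_distrib]
    refine Finset.sum_eq_zero fun i _ => ?_
    rw [← Finset.sum_add_distrib]
    refine Finset.sum_eq_zero fun j _ => ?_
    linear_combination (c k * b j * a i) * key i j k
  · intro x hx
    obtain ⟨a, rfl⟩ : ∃ a : Fin 6 → ℝ, ∑ i, a i • e i = x := ⟨e.repr x, e.sum_repr x⟩
    have h := fun j => hx (e j)
    simp only [map_sum, map_smul, LinearMap.sum_apply, LinearMap.smul_apply, smul_eq_mul,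
      Fin.sum_univ_six] at h
    have h0 := h 0; have h1 := h 1; have h2 := h 2
    have h3 := h 3; have h4 := h 4; have h5 := h 5
    simp [hβ, cv5, cv4, cv3, cv2, cv1, Matrix.vecHead, Matrix.vecTail] at h0 h1 h2 h3 h4 h5
    simp [Fin.sum_univ_six, h0, h1, h2, h3, h4, h5]
  · set v : Fin 6 → g := ![e 0 + (2⁻¹ : ℝ) • e 5, e 3, e 1 - (2⁻¹ : ℝ) • e 4,
      e 2, e 0 - (2⁻¹ : ℝ) • e 5, e 1 + (2⁻¹ : ℝ) • e 4] with hv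
    have hvv : ∀ i j : Fin 6, β (v i) (v j) =
        (if i = j then (if (i : ℕ) < 3 then 1 else -1) else 0 : ℝ) := by
      intro i j
      fin_cases i <;> fin_cases j <;>
        simp [hv, hβ, map_add, map_sub, map_smul, smul_eq_mul, cv5, cv4, cv3, cv2, cv1,
          Matrix.vecHead, Matrix.vecTail] <;> norm_num
    have li : LinearIndependent ℝ v := by
      rw [Fintype.linearIndependent_iff]
      intro c hc i
      have h := congrArg (fun w => β w (v i)) hc
      simp only [map_sum, map_smul, LinearMap.sum_apply, LinearMap.smul_apply, smul_eq_mul,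
        hvv, map_zero, LinearMap.zero_apply] at h
      rw [Finset.sum_eq_single i (fun j _ hji => by rw [if_neg hji, mul_zero])
        (fun hi => absurd (Finset.mem_univ i) hi)] at h
      rw [if_pos rfl] at h
      by_cases hlt : (i : ℕ) < 3 <;> simp [hlt] at h <;> simpa using h
    haveI : Module.Finite ℝ g := Module.Finite.of_basis e
    have hcard : Fintype.card (Fin 6) = Module.finrank ℝ g := by
      simp [Module.finrank_eq_card_basis e]
    let f := basisOfLinearIndependentOfCardEqFinrank li hcard
    have hf : ∀ i, f i = v i := fun i => by
      simp [f, coe_basisOfLinearIndependentOfCardEqFinrank]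
    refine ⟨f, fun i j hij => ?_, fun i => ?_⟩
    · simp only [hf]; rw [hvv, if_neg hij]
    · simp only [hf]; rw [hvv, if_pos rfl]
end

section
/- Let g be the 6-dimensional real nilpotent Lie algebra with basis e₁,…,e₆ and nonzero brackets [e₁,e₂] = e₄, [e₁,e₃] = e₅, [e₂,e₃] = e₆. Then: (a) every ad-invariant symmetric bilinear form β on g satisfies β(e₄,e₄) = β(e₄,e₅) = β(e₄,e₆) = β(e₅,e₅) = β(e₅,e₆) = β(e₆,e₆) = 0 and β(e₃,e₄) = -β(e₂,e₅) = β(e₁,e₆); (b) if β is moreover nondegenerate, then λ := β(e₃,e₄) ≠ 0. -/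
/-- For the 6-dimensional 2-step nilpotent Lie algebra with nonzero
brackets `[e₁,e₂] = e₄`, `[e₁,e₃] = e₅`, `[e₂,e₃] = e₆` (0-indexed below):
(a) every ad-invariant symmetric bilinear form `β` satisfies
`β(e₄,e₄) = β(e₄,e₅) = β(e₄,e₆) = β(e₅,e₅) = β(e₅,e₆) = β(e₆,e₆) = 0` and
`β(e₃,e₄) = -β(e₂,e₅) = β(e₁,e₆)`; (b) if `β` is nondegenerate then `β(e₃,e₄) ≠ 0`. -/
theorem stmt_15 {g : Type*} [LieRing g] [LieAlgebra ℝ g]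
    (e : Module.Basis (Fin 6) ℝ g)
    (h12 : ⁅e 0, e 1⁆ = e 3) (h13 : ⁅e 0, e 2⁆ = e 4) (h23 : ⁅e 1, e 2⁆ = e 5)
    (h0 : ∀ i j : Fin 6,
      (i, j) ∉ ({(0,1), (1,0), (0,2), (2,0), (1,2), (2,1)} : Set (Fin 6 × Fin 6)) →
      ⁅e i, e j⁆ = 0)
    (β : LinearMap.BilinForm ℝ g)
    (hβsymm : ∀ x y : g, β x y = β y x)
    (hβinv : ∀ x y z : g, β ⁅x, y⁆ z + β y ⁅x, z⁆ = 0) :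
    (β (e 3) (e 3) = 0 ∧ β (e 3) (e 4) = 0 ∧ β (e 3) (e 5) = 0 ∧
      β (e 4) (e 4) = 0 ∧ β (e 4) (e 5) = 0 ∧ β (e 5) (e 5) = 0) ∧
    (β (e 2) (e 3) = - β (e 1) (e 4) ∧ β (e 2) (e 3) = β (e 0) (e 5)) ∧
    ((∀ x : g, (∀ y : g, β x y = 0) → x = 0) → β (e 2) (e 3) ≠ 0) := by
  have inv : ∀ x y z : g, β ⁅x, y⁆ z = - β y ⁅x, z⁆ := by
    intro x y z; linarith [hβinv x y z]
  have z03 : ⁅e 0, e 3⁆ = 0 := h0 0 3 (by simp)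
  have z04 : ⁅e 0, e 4⁆ = 0 := h0 0 4 (by simp)
  have z05 : ⁅e 0, e 5⁆ = 0 := h0 0 5 (by simp)
  have z13 : ⁅e 1, e 3⁆ = 0 := h0 1 3 (by simp)
  have z15 : ⁅e 1, e 5⁆ = 0 := h0 1 5 (by simp)
  have b33 : β (e 3) (e 3) = 0 := by
    have h := inv (e 0) (e 1) (e 3); rw [h12, z03] at h; simpa using h
  have b34 : β (e 3) (e 4) = 0 := by
    have h := inv (e 0) (e 1) (e 4); rw [h12, z04] at h; simpa using h
  have b35 : β (e 3) (e 5) = 0 := by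
    have h := inv (e 0) (e 1) (e 5); rw [h12, z05] at h; simpa using h
  have b44 : β (e 4) (e 4) = 0 := by
    have h := inv (e 0) (e 2) (e 4); rw [h13, z04] at h; simpa using h
  have b45 : β (e 4) (e 5) = 0 := by
    have h := inv (e 0) (e 2) (e 5); rw [h13, z05] at h; simpa using h
  have b55 : β (e 5) (e 5) = 0 := by
    have h := inv (e 1) (e 2) (e 5); rw [h23, z15] at h; simpa using h
  have b23 : β (e 2) (e 3) = - β (e 1) (e 4) := by
    have h := inv (e 0) (e 1) (e 2); rw [h12, h13] at h
    rw [hβsymm (e 2) (e 3)]; exact h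
  have b05 : β (e 2) (e 3) = β (e 0) (e 5) := by
    have h := inv (e 1) (e 2) (e 0); rw [h23] at h
    have h10 : ⁅e 1, e 0⁆ = -(e 3) := by
      rw [← lie_skew, h12]
    rw [h10] at h
    rw [hβsymm (e 0) (e 5), h]
    simp [hβsymm (e 2) (e 3)]
  refine ⟨⟨b33, b34, b35, b44, b45, b55⟩, ⟨b23, b05⟩, ?_⟩
  intro hnd hc
  have b30 : β (e 3) (e 0) = 0 := by
    have h := inv (e 0) (e 1) (e 0); rw [h12, lie_self] at h; simpa using h
  have b31 : β (e 3) (e 1) = 0 := by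
    have h := inv (e 0) (e 1) (e 1); rw [h12] at h
    rw [hβsymm (e 1) (e 3)] at h; linarith
  have b32 : β (e 3) (e 2) = 0 := by rw [hβsymm]; exact hc
  have hzero : (β (e 3) : g →ₗ[ℝ] ℝ) = 0 := by
    apply e.ext
    intro i
    fin_cases i <;>
      simp [b30, b31, b32, b33, b34, b35]
  have : e 3 = 0 := hnd (e 3) (fun y => by rw [hzero]; rfl)
  exact e.ne_zero 3 this
end

section
/- Let g be the 6-dimensional real Lie algebra with nonzero brackets [e₁,e₂] = e₄, [e₁,e₃] = e₅, [e₂,e₃] = e₆, and let β be any ad-invariant nondegenerate symmetric bilinear form on g. Then for every μ ∈ ℂ with nonzero imaginary part, the vector v = e₃ - μe₄ ∈ g ⊗ ℂ satisfies β_ℂ(v, v) ≠ 0, where β_ℂ is the ℂ-bilinear extension of β. In particular, no maximally isotropic complex subspace of (g ⊗ ℂ, β_ℂ) contains a vector of the form e₃ - μe₄ with μ ∉ ℝ. -/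
open TensorProduct

/-- For the 6-dimensional 2-step nilpotent Lie algebra with nonzero
brackets `[e₁,e₂] = e₄`, `[e₁,e₃] = e₅`, `[e₂,e₃] = e₆` (0-indexed below) and any
ad-invariant nondegenerate symmetric bilinear form `β`, for every `μ ∈ ℂ` with
nonzero imaginary part the vector `v = e₃ - μe₄ ∈ g ⊗ ℂ` satisfies `β_ℂ(v,v) ≠ 0`;
in particular no maximally isotropic complex subspace of `(g ⊗ ℂ, β_ℂ)` contains
such a vector. -/
theorem stmt_16 {g : Type*} [LieRing g] [LieAlgebra ℝ g]
    (e : Module.Basis (Fin 6) ℝ g)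
    (h12 : ⁅e 0, e 1⁆ = e 3) (h13 : ⁅e 0, e 2⁆ = e 4) (h23 : ⁅e 1, e 2⁆ = e 5)
    (h0 : ∀ i j : Fin 6,
      (i, j) ∉ ({(0,1), (1,0), (0,2), (2,0), (1,2), (2,1)} : Set (Fin 6 × Fin 6)) →
      ⁅e i, e j⁆ = 0)
    (β : LinearMap.BilinForm ℝ g)
    (hβsymm : ∀ x y : g, β x y = β y x)
    (hβinv : ∀ x y z : g, β ⁅x, y⁆ z + β y ⁅x, z⁆ = 0)
    (hβnd : ∀ x : g, (∀ y : g, β x y = 0) → x = 0)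
    (μ : ℂ) (hμ : μ.im ≠ 0) :
    let v : ℂ ⊗[ℝ] g := (1 : ℂ) ⊗ₜ[ℝ] e 2 - μ • ((1 : ℂ) ⊗ₜ[ℝ] e 3)
    (β.baseChange ℂ) v v ≠ 0 ∧
    ∀ L : Submodule ℂ (ℂ ⊗[ℝ] g),
      (∀ u ∈ L, ∀ w ∈ L, (β.baseChange ℂ) u w = 0) →
      Module.finrank ℂ L = 3 → v ∉ L := by
  intro v
  have h33 : β (e 3) (e 3) = 0 := by
    have h := hβinv (e 0) (e 1) (e 3)
    rw [h12, h0 0 3 (by simp)] at h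
    simpa using h
  have h32 : β (e 3) (e 2) ≠ 0 := by
    intro hc
    apply e.ne_zero 3
    apply hβnd
    intro y
    have hz : β (e 3) = 0 := by
      apply e.ext
      intro j
      fin_cases j
      · have h := hβinv (e 0) (e 1) (e 0)
        rw [h12, h0 0 0 (by decide)] at h
        simpa using h
      · have h := hβinv (e 0) (e 1) (e 1)
        rw [h12] at h
        have hs := hβsymm (e 1) (e 3)
        show (β (e 3)) (e 1) = (0 : g →ₗ[ℝ] ℝ) (e 1)
        simp only [LinearMap.zero_apply]
        linarith
      · simpa using hc
      · simpa using h33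
      · have h := hβinv (e 0) (e 1) (e 4)
        rw [h12, h0 0 4 (by simp)] at h
        simpa using h
      · have h := hβinv (e 0) (e 1) (e 5)
        rw [h12, h0 0 5 (by simp)] at h
        simpa using h
    rw [hz]
    rfl
  have key : (β.baseChange ℂ) v v
      = ((β (e 2) (e 2) : ℝ) : ℂ) - 2 * μ * ((β (e 3) (e 2) : ℝ) : ℂ) := by
    simp only [v, map_sub, map_smul, LinearMap.sub_apply, LinearMap.smul_apply,
      LinearMap.BilinForm.baseChange_tmul, smul_eq_mul, mul_one,
      Complex.real_smul, h33, hβsymm (e 2) (e 3)]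
    push_cast
    ring
  have hne : (β.baseChange ℂ) v v ≠ 0 := by
    intro h
    rw [h] at key
    have him := congrArg Complex.im key
    simp at him
    rcases him with h1 | h1
    · exact hμ h1
    · exact h32 h1
  exact ⟨hne, fun L hiso _ hv => hne (hiso v hv v hv)⟩
end

section
/- Let 𝒥 be a skew-symmetric complex structure on E = V ⊕ V* ⊕ g with components (J, A, B, C, μ, ν), and let I be the automorphism of E determined by a triple (K, Φ, β) via I(X) = X + i_Xβ - Φ*Φ(X) + Φ(X), I(η) = η, I(r) = -2Φ*K(r) + K(r). Then the transformed structure 𝒥₁ = I⁻¹ ∘ 𝒥 ∘ I is again skew-symmetric with 𝒥₁² = -Id, and its B-component equals B; in particular B is bijective if and only if the B-component of 𝒥₁ is bijective. Moreover the ν-component of 𝒥₁ is ν₁ = K⁻¹(ν - ΦB). -/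
/-- The map `I` on `E = V ⊕ V* ⊕ g` determined by a triple `(K, Φ, β)`. -/
noncomputable def ImapE {V g : Type*} [AddCommGroup V] [Module ℝ V] [AddCommGroup g] [Module ℝ g]
    (K : g →ₗ[ℝ] g) (Φ : V →ₗ[ℝ] g) (Φs : g →ₗ[ℝ] Module.Dual ℝ V)
    (β : V →ₗ[ℝ] Module.Dual ℝ V)
    (u : V × Module.Dual ℝ V × g) : V × Module.Dual ℝ V × g :=
  (u.1,
   β u.1 - Φs (Φ u.1) + u.2.1 - (2 : ℝ) • Φs (K u.2.2),
   Φ u.1 + K u.2.2)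

/-- For a skew-symmetric complex structure `𝒥` on `E = V ⊕ V* ⊕ g`
and the automorphism `I` determined by `(K, Φ, β)`, the transformed structure
`𝒥₁ = I⁻¹ ∘ 𝒥 ∘ I` is again a skew-symmetric complex structure, its `B`-component
equals `B` (so `𝒥₁` is non-degenerate iff `𝒥` is), and its `ν`-component is
`ν₁ = K⁻¹(ν - ΦB)`. -/
theorem stmt_19 {V g : Type*} [AddCommGroup V] [Module ℝ V] [FiniteDimensional ℝ V]
    [AddCommGroup g] [Module ℝ g] [FiniteDimensional ℝ g]
    (bg : LinearMap.BilinForm ℝ g)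
    (hbg_symm : ∀ r s : g, bg r s = bg s r)
    (hbg_nd : ∀ r : g, (∀ s : g, bg r s = 0) → r = 0)
    (J : V →ₗ[ℝ] V) (B : Module.Dual ℝ V →ₗ[ℝ] V) (C : V →ₗ[ℝ] Module.Dual ℝ V)
    (A : g →ₗ[ℝ] g) (μ : V →ₗ[ℝ] g) (ν : Module.Dual ℝ V →ₗ[ℝ] g)
    (νs : g →ₗ[ℝ] V) (μs : g →ₗ[ℝ] Module.Dual ℝ V)
    (hνs : ∀ (r : g) (ξ : Module.Dual ℝ V), ξ (νs r) = 2 * bg r (ν ξ))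
    (hμs : ∀ (r : g) (X : V), μs r X = 2 * bg r (μ X))
    (hskew : ∀ u v : V × Module.Dual ℝ V × g,
        pairE bg (JblockE J B C A μ ν νs μs u) v = - pairE bg u (JblockE J B C A μ ν νs μs v))
    (hsq : ∀ u : V × Module.Dual ℝ V × g,
        JblockE J B C A μ ν νs μs (JblockE J B C A μ ν νs μs u) = -u)
    (K : g →ₗ[ℝ] g) (Kinv : g →ₗ[ℝ] g)
    (hK1 : ∀ r : g, Kinv (K r) = r) (hK2 : ∀ r : g, K (Kinv r) = r)
    (hKisom : ∀ r s : g, bg (K r) (K s) = bg r s)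
    (Φ : V →ₗ[ℝ] g) (Φs : g →ₗ[ℝ] Module.Dual ℝ V)
    (hΦs : ∀ (s : g) (X : V), Φs s X = bg s (Φ X))
    (β : V →ₗ[ℝ] Module.Dual ℝ V)
    (hβskew : ∀ X Y : V, β X Y = - β Y X)
    (Iinv : V × Module.Dual ℝ V × g → V × Module.Dual ℝ V × g)
    (hIinv : ∀ u : V × Module.Dual ℝ V × g,
      Iinv (ImapE K Φ Φs β u) = u ∧ ImapE K Φ Φs β (Iinv u) = u) :
    let 𝒥₁ : V × Module.Dual ℝ V × g → V × Module.Dual ℝ V × g :=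
      fun u => Iinv (JblockE J B C A μ ν νs μs (ImapE K Φ Φs β u))
    (∀ u v : V × Module.Dual ℝ V × g, pairE bg (𝒥₁ u) v = - pairE bg u (𝒥₁ v)) ∧
    (∀ u : V × Module.Dual ℝ V × g, 𝒥₁ (𝒥₁ u) = -u) ∧
    (∀ ξ : Module.Dual ℝ V, (𝒥₁ (0, ξ, 0)).1 = B ξ) ∧
    ((Function.Bijective fun ξ : Module.Dual ℝ V => B ξ) ↔
      (Function.Bijective fun ξ : Module.Dual ℝ V => (𝒥₁ (0, ξ, 0)).1)) ∧
    (∀ ξ : Module.Dual ℝ V, (𝒥₁ (0, ξ, 0)).2.2 = Kinv (ν ξ - Φ (B ξ))) := by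

  intro 𝒥₁
  -- `I` preserves the pairing
  have hIso : ∀ u v : V × Module.Dual ℝ V × g,
      pairE bg (ImapE K Φ Φs β u) (ImapE K Φ Φs β v) = pairE bg u v := by
    intro u v
    simp only [pairE, ImapE, map_add, map_sub, map_smul, LinearMap.add_apply,
      LinearMap.sub_apply, LinearMap.smul_apply, smul_eq_mul]
    rw [hΦs (Φ v.1) u.1, hΦs (K v.2.2) u.1, hΦs (Φ u.1) v.1, hΦs (K u.2.2) v.1, hKisom]
    have h1 := hβskew u.1 v.1
    have h2 := hbg_symm (Φ u.1) (Φ v.1)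
    have h3 := hbg_symm (K u.2.2) (Φ v.1)
    have h4 := hbg_symm (K v.2.2) (Φ u.1)
    ring_nf
    linarith
  -- `I` commutes with negation
  have hIneg : ∀ u : V × Module.Dual ℝ V × g,
      ImapE K Φ Φs β (-u) = -(ImapE K Φ Φs β u) := by
    intro u
    simp only [ImapE, Prod.fst_neg, Prod.snd_neg, map_neg, Prod.neg_mk, smul_neg]
    refine Prod.ext rfl (Prod.ext ?_ ?_) <;> abel
  have hIinvneg : ∀ w : V × Module.Dual ℝ V × g, Iinv (-w) = - Iinv w := by
    intro w
    conv_lhs => rw [← (hIinv w).2]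
    rw [← hIneg, (hIinv _).1]
  -- explicit formula for `Iinv`
  have hIinvF : ∀ w : V × Module.Dual ℝ V × g, Iinv w =
      (w.1, w.2.1 - β w.1 - Φs (Φ w.1) + (2 : ℝ) • Φs w.2.2, Kinv (w.2.2 - Φ w.1)) := by
    intro w
    have h : ImapE K Φ Φs β
        (w.1, w.2.1 - β w.1 - Φs (Φ w.1) + (2 : ℝ) • Φs w.2.2, Kinv (w.2.2 - Φ w.1)) = w := by
      simp only [ImapE, map_sub, map_add, map_smul, hK2]
      refine Prod.ext rfl (Prod.ext ?_ ?_)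
      · show β w.1 - Φs (Φ w.1) + (w.2.1 - β w.1 - Φs (Φ w.1) + (2 : ℝ) • Φs w.2.2)
            - (2 : ℝ) • (Φs w.2.2 - Φs (Φ w.1)) = w.2.1
        module
      · show Φ w.1 + (w.2.2 - Φ w.1) = w.2.2
        abel
    conv_lhs => rw [← h]
    rw [(hIinv _).1]
  refine ⟨?_, ?_, ?_, ?_, ?_⟩
  · intro u v
    have e1 : pairE bg (𝒥₁ u) v
        = pairE bg (ImapE K Φ Φs β (𝒥₁ u)) (ImapE K Φ Φs β v) := (hIso _ _).symm
    have e2 : ImapE K Φ Φs β (𝒥₁ u)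
        = JblockE J B C A μ ν νs μs (ImapE K Φ Φs β u) := (hIinv _).2
    have e3 : ImapE K Φ Φs β (𝒥₁ v)
        = JblockE J B C A μ ν νs μs (ImapE K Φ Φs β v) := (hIinv _).2
    rw [e1, e2, hskew, ← e3, hIso]
  · intro u
    show Iinv (JblockE J B C A μ ν νs μs (ImapE K Φ Φs β
      (Iinv (JblockE J B C A μ ν νs μs (ImapE K Φ Φs β u))))) = -u
    rw [(hIinv _).2, hsq, hIinvneg, (hIinv _).1]
  · intro ξ
    show (Iinv (JblockE J B C A μ ν νs μs (ImapE K Φ Φs β (0, ξ, 0)))).1 = B ξ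
    simp [ImapE, JblockE, hIinvF]
  · constructor
    · intro h
      have : (fun ξ : Module.Dual ℝ V => (𝒥₁ (0, ξ, 0)).1)
          = fun ξ : Module.Dual ℝ V => B ξ := by
        funext ξ
        show (Iinv (JblockE J B C A μ ν νs μs (ImapE K Φ Φs β (0, ξ, 0)))).1 = B ξ
        simp [ImapE, JblockE, hIinvF]
      rw [this]; exact h
    · intro h
      have : (fun ξ : Module.Dual ℝ V => (𝒥₁ (0, ξ, 0)).1)
          = fun ξ : Module.Dual ℝ V => B ξ := by
        funext ξ
        show (Iinv (JblockE J B C A μ ν νs μs (ImapE K Φ Φs β (0, ξ, 0)))).1 = B ξ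
        simp [ImapE, JblockE, hIinvF]
      rw [this] at h; exact h
  · intro ξ
    show (Iinv (JblockE J B C A μ ν νs μs (ImapE K Φ Φs β (0, ξ, 0)))).2.2
        = Kinv (ν ξ - Φ (B ξ))
    simp [ImapE, JblockE, hIinvF]
end
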